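/- Let M be a complex 3×3 matrix with singular values m_1 ≤ m_2 ≤ m_3. Then there exist row indices i < j and column indices h < k such that the 2×2 submatrix satisfies |M_{ih}M_{jk} − M_{ik}M_{jh}| ≥ m_2 m_3 / 3. -/

import Mathlib

open Matrix

open Polynomial in
/-- `m` is the (increasingly ordered) tuple of singular values of `M`. -/
def IsSingularValues {n : ℕ} (M : Matrix (Fin n) (Fin n) ℂ) (m : Fin n → ℝ) : Prop :=
  (∀ i, 0 ≤ m i) ∧ Monotone m ∧
    (Mᴴ * M).charpoly = ∏ i : Fin n, (X - C ((m i : ℂ) ^ 2))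

open Polynomial in
lemma cubic_coeff1 (a b c : ℂ) : (X^3 + C a * X^2 + C b * X + C c).coeff 1 = b := by
  simp [coeff_X_pow]

open Polynomial in
lemma charpoly_fin3_expand (A : Matrix (Fin 3) (Fin 3) ℂ) :
    A.charpoly = X^3 + C (-(A 0 0 + A 1 1 + A 2 2)) * X^2
      + C (A 0 0*A 1 1 - A 0 1*A 1 0 + A 0 0*A 2 2 - A 0 2*A 2 0
         + A 1 1*A 2 2 - A 1 2*A 2 1) * X
      + C (-(A 0 0*A 1 1*A 2 2 - A 0 0*A 1 2*A 2 1
         - A 0 1*A 1 0*A 2 2 + A 0 1*A 1 2*A 2 0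
         + A 0 2*A 1 0*A 2 1 - A 0 2*A 1 1*A 2 0)) := by
  rw [Matrix.charpoly, Matrix.det_fin_three]
  simp [charmatrix_apply_eq, charmatrix_apply_ne, map_add, map_sub, _root_.map_mul, map_neg]
  ring

open Polynomial in
lemma prod_fin3_expand (a b c : ℂ) :
    ∏ i : Fin 3, (X - C (![a,b,c] i))
    = X^3 + C (-(a+b+c)) * X^2 + C (a*b+a*c+b*c) * X + C (-(a*b*c)) := by
  rw [Fin.prod_univ_three]
  simp only [map_add, map_neg, _root_.map_mul, Matrix.cons_val_zero, Matrix.cons_val_one,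
    Matrix.head_cons, Matrix.cons_val_two, Matrix.tail_cons]
  ring

lemma minor_sum_eq (M : Matrix (Fin 3) (Fin 3) ℂ) :
    (let A := Mᴴ * M
     A 0 0*A 1 1 - A 0 1*A 1 0 + A 0 0*A 2 2 - A 0 2*A 2 0 + A 1 1*A 2 2 - A 1 2*A 2 1)
    = (let d : Fin 3 → Fin 3 → Fin 3 → Fin 3 → ℂ :=
         fun i j h k => M i h * M j k - M i k * M j h
       d 0 1 0 1 * star (d 0 1 0 1) + d 0 1 0 2 * star (d 0 1 0 2) + d 0 1 1 2 * star (d 0 1 1 2)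
     + d 0 2 0 1 * star (d 0 2 0 1) + d 0 2 0 2 * star (d 0 2 0 2) + d 0 2 1 2 * star (d 0 2 1 2)
     + d 1 2 0 1 * star (d 1 2 0 1) + d 1 2 0 2 * star (d 1 2 0 2) + d 1 2 1 2 * star (d 1 2 1 2)) := by
  simp only [Matrix.mul_apply, conjTranspose_apply, Fin.sum_univ_three, star_sub, star_mul']
  ring

/-- Some `2 × 2` subdeterminant of a `3 × 3` matrix is at least `m₂ m₃ / 3`. -/
theorem exists_large_two_by_two_subdet (M : Matrix (Fin 3) (Fin 3) ℂ) (m : Fin 3 → ℝ)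
    (hm : IsSingularValues M m) :
    ∃ i j h k : Fin 3, i < j ∧ h < k ∧
      m 1 * m 2 / 3 ≤ ‖M i h * M j k - M i k * M j h‖ := by
  obtain ⟨hpos, hmono, hchar⟩ := hm
  set d : Fin 3 → Fin 3 → Fin 3 → Fin 3 → ℂ :=
    fun i j h k => M i h * M j k - M i k * M j h with hd
  -- coefficient extraction
  have hprod : (∏ i : Fin 3, (Polynomial.X - Polynomial.C ((m i : ℂ) ^ 2)))
      = ∏ i : Fin 3, (Polynomial.X - Polynomial.C (![(m 0:ℂ)^2, (m 1:ℂ)^2, (m 2:ℂ)^2] i)) := by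
    apply Finset.prod_congr rfl
    intro i _
    fin_cases i <;> simp
  have hc := congrArg (fun p => Polynomial.coeff p 1) hchar
  rw [charpoly_fin3_expand, hprod, prod_fin3_expand] at hc
  simp only [cubic_coeff1] at hc
  -- complex identity
  have hkey := (minor_sum_eq M).symm.trans hc
  simp only [hd] at hkey
  -- convert to real identity
  have habs : ∀ z : ℂ, z * star z = (‖z‖^2 : ℝ) := by
    intro z
    rw [Complex.star_def, Complex.mul_conj, Complex.sq_norm]
  simp only [habs] at hkey
  have hreal : (‖d 0 1 0 1‖)^2 + (‖d 0 1 0 2‖)^2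
      + (‖d 0 1 1 2‖)^2 + (‖d 0 2 0 1‖)^2
      + (‖d 0 2 0 2‖)^2 + (‖d 0 2 1 2‖)^2
      + (‖d 1 2 0 1‖)^2 + (‖d 1 2 0 2‖)^2
      + (‖d 1 2 1 2‖)^2
      = (m 0)^2*(m 1)^2 + (m 0)^2*(m 2)^2 + (m 1)^2*(m 2)^2 := by
    have := hkey
    rw [← Complex.ofReal_inj]
    push_cast at this ⊢
    simp only [hd] at this ⊢
    linear_combination this
  by_contra hcon
  push_neg at hcon
  have hc' : ∀ i j h k : Fin 3, i < j → h < k →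
      ‖d i j h k‖ < m 1 * m 2 / 3 := by
    intro i j h k hij hhk
    exact hcon i j h k hij hhk
  have hcc : (0:ℝ) ≤ m 1 * m 2 / 3 := by
    have := hpos 1; have := hpos 2; positivity
  have hsq : ∀ i j h k : Fin 3, i < j → h < k →
      (‖d i j h k‖)^2 < (m 1 * m 2 / 3)^2 := by
    intro i j h k hij hhk
    have h1 := hc' i j h k hij hhk
    have h0 : (0:ℝ) ≤ ‖d i j h k‖ := norm_nonneg _
    nlinarith
  have h1 := hsq 0 1 0 1 (by decide) (by decide)
  have h2 := hsq 0 1 0 2 (by decide) (by decide)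
  have h3 := hsq 0 1 1 2 (by decide) (by decide)
  have h4 := hsq 0 2 0 1 (by decide) (by decide)
  have h5 := hsq 0 2 0 2 (by decide) (by decide)
  have h6 := hsq 0 2 1 2 (by decide) (by decide)
  have h7 := hsq 1 2 0 1 (by decide) (by decide)
  have h8 := hsq 1 2 0 2 (by decide) (by decide)
  have h9 := hsq 1 2 1 2 (by decide) (by decide)
  have hm0 : (0:ℝ) ≤ (m 0)^2*(m 1)^2 := by positivity
  have hm1 : (0:ℝ) ≤ (m 0)^2*(m 2)^2 := by positivity
  have h9c : (m 1 * m 2 / 3)^2 * 9 = (m 1)^2*(m 2)^2 := by ring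
  linarith
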